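/- arXiv:1907.09970 — 4 statements merged into one kernel-verified Lean document; each statement's English description precedes it below -/
import Mathlib

section
/- Let u be continuous on [0, r*) and δ(r) = δ(0) + ∫_0^r u(s)/s ds with u(s) = s δ'(s), and define η(r) = 3 r^{-3} ∫_0^r δ(s) s² ds. Then |δ(r) − η(r)| ≤ (5r)^{-1/2} (∫_0^r u(s)² ds)^{1/2} for all r ∈ (0, r*). -/
open Set intervalIntegral

open MeasureTheory Filter in
private lemma cs_interval_aux (f g : ℝ → ℝ) (a b : ℝ) (hab : a ≤ b)
    (hf : IntervalIntegrable (fun s => f s ^ 2) volume a b)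
    (hg : IntervalIntegrable (fun s => g s ^ 2) volume a b)
    (hfg : IntervalIntegrable (fun s => f s * g s) volume a b) :
    (∫ s in a..b, f s * g s) ^ 2 ≤ (∫ s in a..b, f s ^ 2) * ∫ s in a..b, g s ^ 2 := by
  set A := ∫ s in a..b, f s ^ 2 with hA
  set B := ∫ s in a..b, f s * g s with hB
  set C := ∫ s in a..b, g s ^ 2 with hC
  have key : ∀ t : ℝ, 0 ≤ A * (t * t) + (2 * B) * t + C := by
    intro t
    have h2 : (0:ℝ) ≤ ∫ s in a..b, (t * f s + g s) ^ 2 :=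
      intervalIntegral.integral_nonneg hab (fun s _ => sq_nonneg _)
    have e1 : (∫ s in a..b, (t * f s + g s) ^ 2)
        = ∫ s in a..b, (t * t) * f s ^ 2 + ((2 * t) * (f s * g s) + g s ^ 2) := by
      apply intervalIntegral.integral_congr; intro s _; ring
    rw [e1, intervalIntegral.integral_add (hf.const_mul _) ((hfg.const_mul _).add hg),
      intervalIntegral.integral_add (hfg.const_mul _) hg,
      intervalIntegral.integral_const_mul, intervalIntegral.integral_const_mul] at h2
    nlinarith [h2]
  have hd := discrim_le_zero key
  rw [discrim] at hd
  nlinarith [hd]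

open MeasureTheory Filter in
private lemma delta_tendsto_aux (rstar : ℝ) (hr : 0 < rstar) (u δ : ℝ → ℝ)
    (hu : ContinuousOn u (Ico 0 rstar))
    (hδ' : ∀ r ∈ Ioo 0 rstar, δ r = δ 0 + ∫ s in (0:ℝ)..r, u s / s) :
    Tendsto δ (nhdsWithin 0 (Ioi 0)) (nhds (δ 0)) := by
  set c := rstar / 2 with hcdef
  have hc0 : 0 < c := by positivity
  have hc1 : c < rstar := by linarith
  have hvcont : ContinuousOn (fun s => u s / s) (Ioo 0 rstar) :=
    (hu.mono Ioo_subset_Ico_self).div continuousOn_id (fun x hx => ne_of_gt hx.1)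
  have hmemIoo : ∀ᶠ x in nhdsWithin (0:ℝ) (Ioi 0), x ∈ Ioo 0 c :=
    Ioo_mem_nhdsGT_of_mem ⟨le_refl 0, hc0⟩
  by_cases hI : IntervalIntegrable (fun s => u s / s) volume 0 c
  · have hcont : ContinuousOn (fun x => ∫ s in (0:ℝ)..x, u s / s) (uIcc 0 c) :=
      intervalIntegral.continuousOn_primitive_interval' hI
        (by rw [uIcc_of_le hc0.le]; exact ⟨le_refl 0, hc0.le⟩)
    have h0 : Tendsto (fun x => ∫ s in (0:ℝ)..x, u s / s) (nhdsWithin 0 (Ioi 0)) (nhds 0) := by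
      have := (hcont 0 (by rw [uIcc_of_le hc0.le]; exact ⟨le_refl 0, hc0.le⟩)).tendsto
      simp only [intervalIntegral.integral_same] at this
      rw [uIcc_of_le hc0.le] at this
      refine this.mono_left ?_
      rw [← nhdsWithin_Ioo_eq_nhdsGT hc0]
      exact nhdsWithin_mono _ Ioo_subset_Icc_self
    have : Tendsto (fun x => δ 0 + ∫ s in (0:ℝ)..x, u s / s)
        (nhdsWithin 0 (Ioi 0)) (nhds (δ 0)) := by
      simpa using (tendsto_const_nhds.add h0)
    refine this.congr' ?_
    filter_upwards [hmemIoo] with x hx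
    exact (hδ' x ⟨hx.1, hx.2.trans hc1⟩).symm
  · have hconst : ∀ᶠ x in nhdsWithin (0:ℝ) (Ioi 0), δ x = δ 0 := by
      filter_upwards [hmemIoo] with x hx
      have hni : ¬ IntervalIntegrable (fun s => u s / s) volume 0 x := by
        intro h
        apply hI
        refine h.trans ?_
        apply ContinuousOn.intervalIntegrable
        apply hvcont.mono
        rw [uIcc_of_le hx.2.le]
        exact fun y hy => ⟨lt_of_lt_of_le hx.1 hy.1, lt_of_le_of_lt hy.2 hc1⟩
      rw [hδ' x ⟨hx.1, hx.2.trans hc1⟩, intervalIntegral.integral_undef hni, add_zero]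
    exact tendsto_const_nhds.congr' (by filter_upwards [hconst] with x hx using hx.symm)

open MeasureTheory Filter in
private lemma delta_minus_eta_eq_aux (rstar : ℝ) (hr : 0 < rstar) (u δ : ℝ → ℝ)
    (hu : ContinuousOn u (Ico 0 rstar))
    (hδ : ∀ r ∈ Ioo 0 rstar, HasDerivAt δ (u r / r) r)
    (hlim : Tendsto δ (nhdsWithin 0 (Ioi 0)) (nhds (δ 0))) :
    ∀ r ∈ Ioo 0 rstar,
      δ r - 3 / r ^ 3 * ∫ s in (0:ℝ)..r, δ s * s ^ 2
        = (∫ s in (0:ℝ)..r, u s * s ^ 2) / r ^ 3 := by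
  have hδcont : ContinuousOn δ (Ico 0 rstar) := by
    intro x hx
    rcases eq_or_lt_of_le hx.1 with h0 | h0
    · rw [← h0]
      rw [show Ico (0:ℝ) rstar = insert 0 (Ioo 0 rstar) by
        rw [Set.Ioo_insert_left hr]]
      rw [continuousWithinAt_insert_self]
      exact hlim.mono_left (nhdsWithin_mono _ Ioo_subset_Ioi_self)
    · exact ((hδ x ⟨h0, hx.2⟩).continuousAt).continuousWithinAt
  have hg1cont : ContinuousOn (fun s => δ s * s ^ 2) (Ico 0 rstar) :=
    hδcont.mul (continuous_pow 2).continuousOn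
  have hg2cont : ContinuousOn (fun s => u s * s ^ 2) (Ico 0 rstar) :=
    hu.mul (continuous_pow 2).continuousOn
  have hsub : ∀ x : ℝ, 0 ≤ x → x < rstar → Icc (0:ℝ) x ⊆ Ico 0 rstar :=
    fun x h0 h1 y hy => ⟨hy.1, lt_of_le_of_lt hy.2 h1⟩
  have hint1 : ∀ x ∈ Ico (0:ℝ) rstar,
      IntervalIntegrable (fun s => δ s * s ^ 2) volume 0 x := fun x hx => by
    apply ContinuousOn.intervalIntegrable
    rw [uIcc_of_le hx.1]; exact hg1cont.mono (hsub x hx.1 hx.2)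
  have hint2 : ∀ x ∈ Ico (0:ℝ) rstar,
      IntervalIntegrable (fun s => u s * s ^ 2) volume 0 x := fun x hx => by
    apply ContinuousOn.intervalIntegrable
    rw [uIcc_of_le hx.1]; exact hg2cont.mono (hsub x hx.1 hx.2)
  set F : ℝ → ℝ := fun x =>
    (∫ s in (0:ℝ)..x, δ s * s ^ 2) - δ x * x ^ 3 / 3 + (∫ s in (0:ℝ)..x, u s * s ^ 2) / 3
    with hFdef
  have hopen : IsOpen (Ioo (0:ℝ) rstar) := isOpen_Ioo
  have hF' : ∀ x ∈ Ioo (0:ℝ) rstar, HasDerivAt F 0 x := by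
    intro x hx
    have hx0 : (0:ℝ) < x := hx.1
    have h1 : HasDerivAt (fun y => ∫ s in (0:ℝ)..y, δ s * s ^ 2) (δ x * x ^ 2) x := by
      exact intervalIntegral.integral_hasDerivAt_right
        (hint1 x ⟨hx0.le, hx.2⟩)
        ((hg1cont.mono Ioo_subset_Ico_self).stronglyMeasurableAtFilter hopen x hx)
        (((hδ x hx).continuousAt).mul ((continuous_pow 2).continuousAt))
    have h3 : HasDerivAt (fun y => ∫ s in (0:ℝ)..y, u s * s ^ 2) (u x * x ^ 2) x := by
      exact intervalIntegral.integral_hasDerivAt_right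
        (hint2 x ⟨hx0.le, hx.2⟩)
        ((hg2cont.mono Ioo_subset_Ico_self).stronglyMeasurableAtFilter hopen x hx)
        (((hu x (Ioo_subset_Ico_self hx)).continuousAt (Ico_mem_nhds hx0 hx.2)).mul
          ((continuous_pow 2).continuousAt))
    have h2 : HasDerivAt (fun y => δ y * y ^ 3 / 3)
        ((u x / x * x ^ 3 + δ x * (3 * x ^ 2)) / 3) x :=
      ((hδ x hx).mul (hasDerivAt_pow 3 x)).div_const 3
    have := (h1.sub h2).add (h3.div_const 3)
    refine this.congr_deriv ?_
    have hxne : x ≠ 0 := ne_of_gt hx0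
    rw [show u x / x * x ^ 3 = u x * x ^ 2 by field_simp]
    ring
  have hFlim : Tendsto F (nhdsWithin 0 (Ioi 0)) (nhds 0) := by
    have c2 : rstar / 2 < rstar := by linarith
    have hc0 : (0:ℝ) < rstar / 2 := by positivity
    have hmono : nhdsWithin (0:ℝ) (Ioi 0) ≤ nhdsWithin 0 (Icc 0 (rstar/2)) := by
      rw [← nhdsWithin_Ioo_eq_nhdsGT hc0]
      exact nhdsWithin_mono _ Ioo_subset_Icc_self
    have hG1 : Tendsto (fun x => ∫ s in (0:ℝ)..x, δ s * s ^ 2)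
        (nhdsWithin 0 (Ioi 0)) (nhds 0) := by
      have hcont := intervalIntegral.continuousOn_primitive_interval'
        (hint1 (rstar/2) ⟨hc0.le, c2⟩)
        (by rw [uIcc_of_le hc0.le]; exact ⟨le_refl 0, hc0.le⟩)
      have := (hcont 0 (by rw [uIcc_of_le hc0.le]; exact ⟨le_refl 0, hc0.le⟩)).tendsto
      simp only [intervalIntegral.integral_same] at this
      rw [uIcc_of_le hc0.le] at this
      exact this.mono_left hmono
    have hG2 : Tendsto (fun x => ∫ s in (0:ℝ)..x, u s * s ^ 2)
        (nhdsWithin 0 (Ioi 0)) (nhds 0) := by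
      have hcont := intervalIntegral.continuousOn_primitive_interval'
        (hint2 (rstar/2) ⟨hc0.le, c2⟩)
        (by rw [uIcc_of_le hc0.le]; exact ⟨le_refl 0, hc0.le⟩)
      have := (hcont 0 (by rw [uIcc_of_le hc0.le]; exact ⟨le_refl 0, hc0.le⟩)).tendsto
      simp only [intervalIntegral.integral_same] at this
      rw [uIcc_of_le hc0.le] at this
      exact this.mono_left hmono
    have hmid : Tendsto (fun x => δ x * x ^ 3 / 3) (nhdsWithin 0 (Ioi 0)) (nhds 0) := by
      have hp : Tendsto (fun x : ℝ => x ^ 3) (nhdsWithin 0 (Ioi 0)) (nhds 0) := by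
        have := (continuous_pow 3).tendsto (0:ℝ)
        simpa using this.mono_left nhdsWithin_le_nhds
      have := (hlim.mul hp).div_const 3
      simpa using this
    have := (hG1.sub hmid).add (hG2.div_const 3)
    simpa using this
  have hFzero : ∀ r ∈ Ioo (0:ℝ) rstar, F r = 0 := by
    intro r hrr
    have hconst : ∀ x ∈ Ioo (0:ℝ) r, F x = F r := by
      intro x hx
      have hIccsub : Icc x r ⊆ Ioo 0 rstar := fun y hy => ⟨lt_of_lt_of_le hx.1 hy.1,
        lt_of_le_of_lt hy.2 hrr.2⟩
      have hFc : ContinuousOn F (Icc x r) := fun y hy =>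
        ((hF' y (hIccsub hy)).continuousAt).continuousWithinAt
      obtain ⟨cc, hcc, hslope⟩ := exists_hasDerivAt_eq_slope F (fun _ => 0) hx.2 hFc
        (fun y hy => hF' y (hIccsub (Ioo_subset_Icc_self hy)))
      have hne : r - x ≠ 0 := sub_ne_zero.mpr (ne_of_gt hx.2)
      field_simp at hslope
      linarith
    have htend : Tendsto F (nhdsWithin 0 (Ioi 0)) (nhds (F r)) := by
      refine tendsto_const_nhds.congr' ?_
      filter_upwards [Ioo_mem_nhdsGT_of_mem ⟨le_refl 0, hrr.1⟩] with x hx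
      exact (hconst x hx).symm
    exact (tendsto_nhds_unique htend hFlim)
  intro r hrr
  have hF0 := hFzero r hrr
  rw [hFdef] at hF0
  simp only at hF0
  have hr3 : r ^ 3 ≠ 0 := ne_of_gt (pow_pos hrr.1 3)
  have : (∫ s in (0:ℝ)..r, δ s * s ^ 2)
      = δ r * r ^ 3 / 3 - (∫ s in (0:ℝ)..r, u s * s ^ 2) / 3 := by
    linarith
  rw [this]
  field_simp
  rw [sub_div, mul_div_assoc, div_self hr3]
  ring

/-- Cauchy–Schwarz estimate for the deviation of δ from its cubic average η. -/
theorem delta_minus_eta_estimate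
    (rstar : ℝ) (hr : 0 < rstar) (u δ η : ℝ → ℝ)
    (hu : ContinuousOn u (Ico 0 rstar))
    (hδ : ∀ r ∈ Ioo 0 rstar, HasDerivAt δ (u r / r) r)
    (hδ' : ∀ r ∈ Ioo 0 rstar, δ r = δ 0 + ∫ s in (0:ℝ)..r, u s / s)
    (hη : ∀ r ∈ Ioo 0 rstar, η r = 3 / r ^ 3 * ∫ s in (0:ℝ)..r, δ s * s ^ 2) :
    ∀ r ∈ Ioo 0 rstar,
      |δ r - η r| ≤ Real.sqrt (∫ s in (0:ℝ)..r, u s ^ 2) / Real.sqrt (5 * r) := by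
  have hlim := delta_tendsto_aux rstar hr u δ hu hδ'
  have hkey := delta_minus_eta_eq_aux rstar hr u δ hu hδ hlim
  intro r hrr
  have hr0 : (0:ℝ) < r := hrr.1
  have hsub : Icc (0:ℝ) r ⊆ Ico 0 rstar := fun y hy => ⟨hy.1, lt_of_le_of_lt hy.2 hrr.2⟩
  have hucont : ContinuousOn u (Icc 0 r) := hu.mono hsub
  have hf2 : IntervalIntegrable (fun s => u s ^ 2) MeasureTheory.volume 0 r := by
    apply ContinuousOn.intervalIntegrable
    rw [uIcc_of_le hr0.le]
    exact hucont.pow 2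
  have hg2 : IntervalIntegrable (fun s : ℝ => (s ^ 2) ^ 2) MeasureTheory.volume 0 r := by
    apply ContinuousOn.intervalIntegrable
    exact (((continuous_pow 2).pow 2).continuousOn)
  have hfg : IntervalIntegrable (fun s => u s * s ^ 2) MeasureTheory.volume 0 r := by
    apply ContinuousOn.intervalIntegrable
    rw [uIcc_of_le hr0.le]
    exact hucont.mul (continuous_pow 2).continuousOn
  set A := ∫ s in (0:ℝ)..r, u s ^ 2 with hAdef
  set B := ∫ s in (0:ℝ)..r, u s * s ^ 2 with hBdef
  have hA0 : 0 ≤ A := intervalIntegral.integral_nonneg hr0.le (fun s _ => sq_nonneg _)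
  have hC : (∫ s in (0:ℝ)..r, (s ^ 2) ^ 2) = r ^ 5 / 5 := by
    rw [intervalIntegral.integral_congr (g := fun s : ℝ => s ^ 4) (fun s _ => by ring)]
    rw [integral_pow]
    norm_num
  have hcs : B ^ 2 ≤ A * (r ^ 5 / 5) := by
    have := cs_interval_aux u (fun s => s ^ 2) 0 r hr0.le hf2 hg2 hfg
    rwa [hC] at this
  have h5r : (0:ℝ) < 5 * r := by linarith
  have hsroot : Real.sqrt (r ^ 5 / 5) = r ^ 3 / Real.sqrt (5 * r) := by
    rw [show r ^ 5 / 5 = (r ^ 3) ^ 2 / (5 * r) by field_simp]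
    rw [Real.sqrt_div (sq_nonneg _), Real.sqrt_sq (pow_pos hr0 3).le]
  have hB : |B| ≤ Real.sqrt A * (r ^ 3 / Real.sqrt (5 * r)) := by
    have h2 : |B| ≤ Real.sqrt (A * (r ^ 5 / 5)) := Real.abs_le_sqrt hcs
    rwa [Real.sqrt_mul hA0, hsroot] at h2
  have hsr : (0:ℝ) < Real.sqrt (5 * r) := Real.sqrt_pos.mpr h5r
  have hr3 : (0:ℝ) < r ^ 3 := pow_pos hr0 3
  calc |δ r - η r| = |B| / r ^ 3 := by
        rw [hη r hrr, hkey r hrr, abs_div, abs_of_pos hr3]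
    _ ≤ (Real.sqrt A * (r ^ 3 / Real.sqrt (5 * r))) / r ^ 3 := by gcongr
    _ = Real.sqrt A / Real.sqrt (5 * r) := by
        field_simp
end

section
/- If a continuous function u on [0, r*) satisfies u(0) = 0 and u(r) ≤ C(r² + (1/r)∫_0^r u(s)² ds) for all r ∈ (0, r*) with C > 0, then there exists r₀ > 0 and C' > 0 such that u(r) ≤ C' r² for all r ∈ [0, r₀). -/
open Set intervalIntegral

/-- Quadratic decay at the origin from the nonlinear integral inequality. -/
theorem quadratic_decay_at_origin
    (rstar : ℝ) (hr : 0 < rstar) (u : ℝ → ℝ) (C : ℝ) (hC : 0 < C)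
    (hu : ContinuousOn u (Ico 0 rstar))
    (hu0 : u 0 = 0)
    (hunn : ∀ r ∈ Ico 0 rstar, 0 ≤ u r)
    (hineq : ∀ r ∈ Ioo 0 rstar,
      u r ≤ C * (r ^ 2 + (1 / r) * ∫ s in (0:ℝ)..r, u s ^ 2)) :
    ∃ r₀ > 0, r₀ ≤ rstar ∧ ∃ C' > 0, ∀ r ∈ Ico 0 r₀, u r ≤ C' * r ^ 2 := by
  obtain ⟨ε, hεdef⟩ : ∃ e : ℝ, e = 1 / (4 * C) := ⟨_, rfl⟩
  have hεpos : 0 < ε := by rw [hεdef]; positivity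
  -- continuity at 0 : find δ with u < ε on [0, δ) ∩ Ico 0 rstar
  have hcw : ContinuousWithinAt u (Ico 0 rstar) 0 := hu 0 ⟨le_refl 0, hr⟩
  have hpre : u ⁻¹' Iio ε ∈ nhdsWithin 0 (Ico 0 rstar) := by
    apply hcw
    rw [hu0]
    exact Iio_mem_nhds hεpos
  rw [Metric.mem_nhdsWithin_iff] at hpre
  obtain ⟨δ, hδpos, hδsub⟩ := hpre
  obtain ⟨r₀, hr₀def⟩ : ∃ x : ℝ, x = min δ (min (rstar / 2) ε) := ⟨_, rfl⟩
  have hr₀pos : 0 < r₀ := hr₀def ▸ lt_min hδpos (lt_min (by linarith) hεpos)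
  have hr₀δ : r₀ ≤ δ := hr₀def ▸ min_le_left _ _
  have hr₀rs : r₀ ≤ rstar / 2 := hr₀def ▸ le_trans (min_le_right _ _) (min_le_left _ _)
  have hr₀ε : r₀ ≤ ε := hr₀def ▸ le_trans (min_le_right _ _) (min_le_right _ _)
  have hmem : ∀ s : ℝ, 0 ≤ s → s < r₀ → s ∈ Ico 0 rstar := by
    intro s h1 h2
    exact ⟨h1, by linarith [lt_of_lt_of_le h2 hr₀rs]⟩
  have husmall : ∀ s : ℝ, 0 ≤ s → s < r₀ → u s < ε := by
    intro s h1 h2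
    apply hδsub
    constructor
    · simp only [Metric.mem_ball, Real.dist_eq, sub_zero, abs_of_nonneg h1]
      exact lt_of_lt_of_le h2 hr₀δ
    · exact hmem s h1 h2
  -- key induction
  have key : ∀ n : ℕ, ∀ δ' : ℝ, 0 < δ' → δ' < r₀ →
      ∀ s : ℝ, 0 ≤ s → s ≤ δ' → u s ≤ ε / 2 ^ n + 4 * C * δ' ^ 2 := by
    intro n
    induction n with
    | zero =>
      intro δ' hδ'pos hδ'lt s hs0 hsδ'
      have h1 : u s < ε := husmall s hs0 (lt_of_le_of_lt hsδ' hδ'lt)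
      have h2 : 0 ≤ 4 * C * δ' ^ 2 := by positivity
      simp only [pow_zero, div_one]
      linarith
    | succ n ih =>
      intro δ' hδ'pos hδ'lt s hs0 hsδ'
      rcases eq_or_lt_of_le hs0 with hs | hs
      · rw [← hs, hu0]
        positivity
      obtain ⟨a, hadef⟩ : ∃ x : ℝ, x = ε / 2 ^ n + 4 * C * δ' ^ 2 := ⟨_, rfl⟩
      have ha0 : 0 ≤ a := by rw [hadef]; positivity
      have hδ'ε : δ' ≤ 1 / (4 * C) := le_of_lt (lt_of_lt_of_le hδ'lt (le_trans hr₀ε (le_of_eq hεdef)))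
      have h4Cδ : δ' * (4 * C) ≤ 1 := (le_div_iff₀ (by positivity)).mp hδ'ε
      have hεn : ε / 2 ^ n ≤ ε := by
        apply div_le_self hεpos.le
        exact one_le_pow₀ (by norm_num)
      have h1 : 4 * C * δ' ^ 2 ≤ δ' := by nlinarith [hδ'pos.le]
      have h2 : ε * (4 * C) = 1 := by rw [hεdef]; field_simp
      have e2 : ε / 2 ^ n * (2 * C) ≤ 1 / 2 := by
        calc ε / 2 ^ n * (2 * C) ≤ ε * (2 * C) :=
              mul_le_mul_of_nonneg_right hεn (by positivity)
          _ ≤ 1 / 2 := by linarith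
      have e3 : 4 * C * δ' ^ 2 * (2 * C) ≤ 1 / 2 := by
        calc 4 * C * δ' ^ 2 * (2 * C) ≤ δ' * (2 * C) :=
              mul_le_mul_of_nonneg_right h1 (by positivity)
          _ ≤ 1 / 2 := by linarith
      have haC : a * (2 * C) ≤ 1 := by
        calc a * (2 * C) = ε / 2 ^ n * (2 * C) + 4 * C * δ' ^ 2 * (2 * C) := by
              rw [hadef]; ring
          _ ≤ 1 := by linarith
      have hCa : C * a ^ 2 ≤ a / 2 := by
        have := mul_le_mul_of_nonneg_right haC ha0
        nlinarith
      have hIH : ∀ t : ℝ, 0 ≤ t → t ≤ δ' → u t ≤ a := by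
        rw [hadef]; exact ih δ' hδ'pos hδ'lt
      have hsIoo : s ∈ Ioo 0 rstar := ⟨hs, by
        have := lt_of_le_of_lt hsδ' hδ'lt
        linarith [lt_of_lt_of_le this hr₀rs]⟩
      have hicc : Icc (0:ℝ) s ⊆ Ico 0 rstar := by
        intro t ht
        exact hmem t ht.1 (lt_of_le_of_lt (le_trans ht.2 hsδ') hδ'lt)
      have hcont : ContinuousOn (fun t => u t ^ 2) (Icc 0 s) := (hu.mono hicc).pow 2
      have hint : IntervalIntegrable (fun t => u t ^ 2) MeasureTheory.volume 0 s := by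
        apply ContinuousOn.intervalIntegrable
        rwa [uIcc_of_le hs.le]
      have hintle : (∫ t in (0:ℝ)..s, u t ^ 2) ≤ a ^ 2 * s := by
        have hmono : (∫ t in (0:ℝ)..s, u t ^ 2) ≤ ∫ _t in (0:ℝ)..s, a ^ 2 := by
          apply intervalIntegral.integral_mono_on hs.le hint intervalIntegrable_const
          intro t ht
          have htnn := hunn t (hicc ht)
          have htle := hIH t ht.1 (le_trans ht.2 hsδ')
          nlinarith
        rw [intervalIntegral.integral_const, smul_eq_mul, sub_zero] at hmono
        linarith [hmono]
      have hfrac : (1 / s) * (∫ t in (0:ℝ)..s, u t ^ 2) ≤ a ^ 2 := by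
        have h1 : (1 / s) * (∫ t in (0:ℝ)..s, u t ^ 2) ≤ (1 / s) * (a ^ 2 * s) := by
          apply mul_le_mul_of_nonneg_left hintle (by positivity)
        have h2 : (1 / s) * (a ^ 2 * s) = a ^ 2 := by field_simp
        linarith
      have hmain := hineq s hsIoo
      have hle1 : u s ≤ C * δ' ^ 2 + C * a ^ 2 := by
        have hsq : s ^ 2 ≤ δ' ^ 2 := by nlinarith
        calc u s ≤ C * (s ^ 2 + (1 / s) * ∫ t in (0:ℝ)..s, u t ^ 2) := hmain
          _ ≤ C * (δ' ^ 2 + a ^ 2) := by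
              apply mul_le_mul_of_nonneg_left _ hC.le
              linarith
          _ = C * δ' ^ 2 + C * a ^ 2 := by ring
      have hhalf : ε / 2 ^ (n + 1) = ε / 2 ^ n / 2 := by
        rw [pow_succ]; ring
      have : a / 2 = ε / 2 ^ (n + 1) + 2 * C * δ' ^ 2 := by
        rw [hhalf, hadef]; ring
      have hCδ2 : 0 ≤ C * δ' ^ 2 := by positivity
      linarith
  -- conclusion
  refine ⟨r₀, hr₀pos, by linarith, 4 * C, by positivity, ?_⟩
  rintro r ⟨hrnn, hrlt⟩
  rcases eq_or_lt_of_le hrnn with hr0 | hr0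
  · rw [← hr0, hu0]; norm_num
  have hall : ∀ n : ℕ, u r ≤ ε / 2 ^ n + 4 * C * r ^ 2 :=
    fun n => key n r hr0 hrlt r hrnn le_rfl
  have htend : Filter.Tendsto (fun n : ℕ => ε / 2 ^ n + 4 * C * r ^ 2)
      Filter.atTop (nhds (0 + 4 * C * r ^ 2)) := by
    apply Filter.Tendsto.add _ tendsto_const_nhds
    have h1 : Filter.Tendsto (fun n : ℕ => ε * (1 / 2 : ℝ) ^ n) Filter.atTop (nhds (ε * 0)) :=
      (tendsto_pow_atTop_nhds_zero_of_lt_one (by norm_num) (by norm_num)).const_mul ε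
    rw [mul_zero] at h1
    have heq : (fun n : ℕ => ε / 2 ^ n) = (fun n : ℕ => ε * (1 / 2 : ℝ) ^ n) := by
      funext n
      rw [one_div, inv_pow, div_eq_mul_inv]
    rw [heq]
    exact h1
  have := ge_of_tendsto' htend hall
  linarith
end

section
/- For a hyperelastic material, with p̂_rad(δ,η) = δ² ∂_δ ŵ(δ,η) and p̂_tan(δ,η) = p̂_rad(δ,η) + (3/2)δη ∂_η ŵ(δ,η), define χ(δ) = p̂_tan(δ,δ) − p̂_rad(δ,δ) and p̂_iso(δ,η) = (1/3)(p̂_rad(δ,η) + 2 p̂_tan(δ,η)). Then (3/2)∂_η p̂_iso(δ,δ) = χ'(δ) − χ(δ)/δ for all δ > 0. -/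
open Set

/-- Radial pressure of a hyperelastic material: p̂_rad(δ,η) = δ² ∂_δ ŵ(δ,η). -/
noncomputable def pradH (w : ℝ → ℝ → ℝ) (δ η : ℝ) : ℝ :=
  δ ^ 2 * deriv (fun d => w d η) δ

/-- Tangential pressure: p̂_tan = p̂_rad + (3/2) δ η ∂_η ŵ. -/
noncomputable def ptanH (w : ℝ → ℝ → ℝ) (δ η : ℝ) : ℝ :=
  pradH w δ η + (3 / 2) * δ * η * deriv (fun e => w δ e) η

/-- Isotropic pressure: p̂_iso = (1/3)(p̂_rad + 2 p̂_tan). -/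
noncomputable def pisoH (w : ℝ → ℝ → ℝ) (δ η : ℝ) : ℝ :=
  (1 / 3) * (pradH w δ η + 2 * ptanH w δ η)

/-- Pressure anisotropy on the diagonal: χ(δ) = p̂_tan(δ,δ) − p̂_rad(δ,δ). -/
noncomputable def chiH (w : ℝ → ℝ → ℝ) (δ : ℝ) : ℝ :=
  ptanH w δ δ - pradH w δ δ

/-- For hyperelastic materials, (3/2)∂_η p̂_iso(δ,δ) = χ'(δ) − χ(δ)/δ. -/
theorem hyperelastic_iso_pressure_identity
    (w : ℝ → ℝ → ℝ)
    (hw : ContDiffOn ℝ 3 (fun p : ℝ × ℝ => w p.1 p.2) (Ioi 0 ×ˢ Ioi 0)) :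
    ∀ δ > (0 : ℝ),
      (3 / 2) * deriv (fun e => pisoH w δ e) δ =
        deriv (chiH w) δ - chiH w δ / δ := by
  intro δ hδ
  set F : ℝ × ℝ → ℝ := fun p => w p.1 p.2 with hF
  set U : Set (ℝ × ℝ) := Ioi 0 ×ˢ Ioi 0 with hU
  have hUopen : IsOpen U := isOpen_Ioi.prod isOpen_Ioi
  have hFat : ∀ p ∈ U, ContDiffAt ℝ 3 F p := fun p hp =>
    hw.contDiffAt (hUopen.mem_nhds hp)
  set f1 : ℝ × ℝ → ℝ := fun p => fderiv ℝ F p (1, 0) with hf1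
  set f2 : ℝ × ℝ → ℝ := fun p => fderiv ℝ F p (0, 1) with hf2
  -- partial derivatives via lines
  have key1 : ∀ a b : ℝ, 0 < a → 0 < b →
      HasDerivAt (fun d => w d b) (f1 (a, b)) a := by
    intro a b ha hb
    have hd : DifferentiableAt ℝ F (a, b) :=
      (hFat (a, b) ⟨ha, hb⟩).differentiableAt (by norm_num)
    have hc : HasDerivAt (fun d => ((d, b) : ℝ × ℝ)) ((1 : ℝ), (0 : ℝ)) a :=
      (hasDerivAt_id a).prodMk (hasDerivAt_const a b)
    exact hd.hasFDerivAt.comp_hasDerivAt a hc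
  have key2 : ∀ a b : ℝ, 0 < a → 0 < b →
      HasDerivAt (fun e => w a e) (f2 (a, b)) b := by
    intro a b ha hb
    have hd : DifferentiableAt ℝ F (a, b) :=
      (hFat (a, b) ⟨ha, hb⟩).differentiableAt (by norm_num)
    have hc : HasDerivAt (fun e => ((a, e) : ℝ × ℝ)) ((0 : ℝ), (1 : ℝ)) b :=
      (hasDerivAt_const b a).prodMk (hasDerivAt_id b)
    exact hd.hasFDerivAt.comp_hasDerivAt b hc
  -- second derivative
  have hq : ((δ, δ) : ℝ × ℝ) ∈ U := ⟨hδ, hδ⟩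
  have hF3q : ContDiffAt ℝ 3 F (δ, δ) := hFat _ hq
  have hf'2 : ContDiffAt ℝ 2 (fderiv ℝ F) (δ, δ) :=
    hF3q.fderiv_right (by norm_num)
  set D := fderiv ℝ (fderiv ℝ F) (δ, δ) with hD
  have hDd : HasFDerivAt (fderiv ℝ F) D (δ, δ) :=
    (hf'2.differentiableAt (by norm_num)).hasFDerivAt
  have hev1 : HasFDerivAt f1
      ((ContinuousLinearMap.apply ℝ ℝ ((1 : ℝ), (0 : ℝ))).comp D) (δ, δ) :=
    (ContinuousLinearMap.apply ℝ ℝ ((1 : ℝ), (0 : ℝ))).hasFDerivAt.comp (δ, δ) hDd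
  have hev2 : HasFDerivAt f2
      ((ContinuousLinearMap.apply ℝ ℝ ((0 : ℝ), (1 : ℝ))).comp D) (δ, δ) :=
    (ContinuousLinearMap.apply ℝ ℝ ((0 : ℝ), (1 : ℝ))).hasFDerivAt.comp (δ, δ) hDd
  have hcV : HasDerivAt (fun e => ((δ, e) : ℝ × ℝ)) ((0 : ℝ), (1 : ℝ)) δ :=
    (hasDerivAt_const δ δ).prodMk (hasDerivAt_id δ)
  have hcDiag : HasDerivAt (fun d => ((d, d) : ℝ × ℝ)) ((1 : ℝ), (1 : ℝ)) δ :=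
    (hasDerivAt_id δ).prodMk (hasDerivAt_id δ)
  have hf1V : HasDerivAt (fun e => f1 (δ, e)) (D (0, 1) (1, 0)) δ :=
    hev1.comp_hasDerivAt δ hcV
  have hf2V : HasDerivAt (fun e => f2 (δ, e)) (D (0, 1) (0, 1)) δ :=
    hev2.comp_hasDerivAt δ hcV
  have hf2Diag : HasDerivAt (fun d => f2 (d, d)) (D (1, 1) (0, 1)) δ := by
    have h := HasFDerivAt.comp_hasDerivAt (f := fun d : ℝ => ((d, d) : ℝ × ℝ)) δ hev2 hcDiag
    exact h
  -- symmetry of second derivative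
  have hsymm : D (0, 1) (1, 0) = D (1, 0) (0, 1) :=
    (hF3q.isSymmSndFDerivAt (by norm_num)) (0, 1) (1, 0)
  have hsplit : D (1, 1) (0, 1) = D (1, 0) (0, 1) + D (0, 1) (0, 1) := by
    have h : ((1 : ℝ), (1 : ℝ)) = ((1 : ℝ), (0 : ℝ)) + ((0 : ℝ), (1 : ℝ)) := by
      simp
    rw [h, map_add, ContinuousLinearMap.add_apply]
  -- LHS
  have hevL : (fun e => pisoH w δ e) =ᶠ[nhds δ]
      fun e => δ ^ 2 * f1 (δ, e) + δ * e * f2 (δ, e) := by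
    filter_upwards [Ioi_mem_nhds hδ] with e he
    have h1 := (key1 δ e hδ he).deriv
    have h2 := (key2 δ e hδ he).deriv
    simp only [pisoH, pradH, ptanH, h1, h2]
    ring
  have hLd : HasDerivAt
      (fun e => δ ^ 2 * f1 (δ, e) + δ * e * f2 (δ, e))
      (δ ^ 2 * D (0, 1) (1, 0) + (δ * f2 (δ, δ) + δ * δ * D (0, 1) (0, 1))) δ := by
    have hu : HasDerivAt (fun e : ℝ => δ * e) δ δ := by
      simpa using (hasDerivAt_id δ).const_mul δ
    exact (hf1V.const_mul (δ ^ 2)).add (hu.mul hf2V)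
  have hLHS : deriv (fun e => pisoH w δ e) δ =
      δ ^ 2 * D (0, 1) (1, 0) + (δ * f2 (δ, δ) + δ * δ * D (0, 1) (0, 1)) := by
    rw [hevL.deriv_eq, hLd.deriv]
  -- chi
  have hevC : chiH w =ᶠ[nhds δ] fun d => 3 / 2 * d * d * f2 (d, d) := by
    filter_upwards [Ioi_mem_nhds hδ] with d hd
    have h2 := (key2 d d hd hd).deriv
    simp only [chiH, ptanH, pradH, h2]
    ring
  have hCd : HasDerivAt (fun d => 3 / 2 * d * d * f2 (d, d))
      ((3 / 2 * δ + 3 / 2 * δ) * f2 (δ, δ) + 3 / 2 * δ * δ * D (1, 1) (0, 1)) δ := by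
    have hu : HasDerivAt (fun d : ℝ => 3 / 2 * d * d) (3 / 2 * δ + 3 / 2 * δ) δ := by
      have := ((hasDerivAt_id δ).const_mul (3 / 2 : ℝ)).mul (hasDerivAt_id δ)
      refine this.congr_deriv ?_
      simp only [id_eq]
      ring
    exact hu.mul hf2Diag
  have hchi' : deriv (chiH w) δ =
      (3 / 2 * δ + 3 / 2 * δ) * f2 (δ, δ) + 3 / 2 * δ * δ * D (1, 1) (0, 1) := by
    rw [hevC.deriv_eq, hCd.deriv]
  have hchival : chiH w δ = 3 / 2 * δ * δ * f2 (δ, δ) := hevC.self_of_nhds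
  -- conclude
  rw [hLHS, hchi', hchival, hsplit, hsymm]
  have hδ0 : δ ≠ 0 := ne_of_gt hδ
  field_simp
  ring
end

section
/- For the Seth self-similar solution, the radial pressure p_rad^⋆(r) = −p₀ + ((9λ+2μ)/8) d^{1/2}/r, with p₀ = (3λ+2μ)/2 and d = 3(9λ+14μ)/(16πK²), is positive for 0 < r < R, zero at r = R, and negative for r > R, where R = (9λ+2μ)√(27λ+42μ)/(√π K (48λ+32μ)); moreover p_tan^⋆(r) = −p₀ + ((9λ+8μ)/8) d^{1/2}/r > p_rad^⋆(r) for all r > 0, assuming λ, μ > 0 and K > 0. -/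
open Real

/-- Sign properties of the principal pressures along the Seth self-similar
    solution. -/
theorem seth_self_similar_pressures (lam mu K : ℝ)
    (hlam : 0 < lam) (hmu : 0 < mu) (hK : 0 < K)
    (d : ℝ) (hdval : d = 3 * (9 * lam + 14 * mu) / (16 * π * K ^ 2))
    (prad ptan : ℝ → ℝ)
    (hprad : prad = fun r =>
      -(3 * lam + 2 * mu) / 2 + ((9 * lam + 2 * mu) / 8) * Real.sqrt d / r)
    (hptan : ptan = fun r =>
      -(3 * lam + 2 * mu) / 2 + ((9 * lam + 8 * mu) / 8) * Real.sqrt d / r)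
    (R : ℝ) (hR : R = (9 * lam + 2 * mu) * Real.sqrt (27 * lam + 42 * mu)
        / (Real.sqrt π * K * (48 * lam + 32 * mu))) :
    (∀ r : ℝ, 0 < r → r < R → 0 < prad r) ∧
    prad R = 0 ∧
    (∀ r : ℝ, R < r → prad r < 0) ∧
    (∀ r > (0 : ℝ), prad r < ptan r) := by
  have hπ := Real.pi_pos
  have hs : (0:ℝ) < 27 * lam + 42 * mu := by linarith
  have hsq : 0 < Real.sqrt (27 * lam + 42 * mu) := Real.sqrt_pos.mpr hs
  have hπq : 0 < Real.sqrt π := Real.sqrt_pos.mpr hπ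
  have h1 : Real.sqrt (27 * lam + 42 * mu) ^ 2 = 27 * lam + 42 * mu :=
    Real.sq_sqrt hs.le
  have h2 : Real.sqrt π ^ 2 = π := Real.sq_sqrt hπ.le
  have hx : Real.sqrt d = Real.sqrt (27 * lam + 42 * mu) / (4 * Real.sqrt π * K) := by
    rw [hdval, show 3 * (9 * lam + 14 * mu) / (16 * π * K ^ 2)
        = (Real.sqrt (27 * lam + 42 * mu) / (4 * Real.sqrt π * K)) ^ 2 by
      field_simp
      linear_combination (48 * (9 * lam + 14 * mu)) * h2 - (16 * π) * (Real.sq_sqrt (by linarith) : Real.sqrt (lam * 27 + mu * 42) ^ 2 = lam * 27 + mu * 42)]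
    exact Real.sqrt_sq (by positivity)
  have hRpos : 0 < R := by rw [hR]; positivity
  have hA : (9 * lam + 2 * mu) / 8 * Real.sqrt d = (3 * lam + 2 * mu) / 2 * R := by
    rw [hx, hR]
    field_simp
    ring
  have key : ∀ r : ℝ, r ≠ 0 → prad r = (3 * lam + 2 * mu) / 2 * (R - r) / r := by
    intro r hr
    rw [hprad]
    simp only
    rw [hA]
    field_simp
    ring
  have hdpos : 0 < Real.sqrt d := by rw [hx]; positivity
  refine ⟨?_, ?_, ?_, ?_⟩
  · intro r hr hrR
    rw [key r hr.ne']
    have : 0 < R - r := by linarith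
    positivity
  · rw [key R hRpos.ne']
    simp
  · intro r hrR
    have hr : 0 < r := lt_trans hRpos hrR
    rw [key r hr.ne']
    apply div_neg_of_neg_of_pos _ hr
    nlinarith
  · intro r hr
    rw [hprad, hptan]
    simp only
    have h3 : 0 < Real.sqrt d / r := by positivity
    have : (9 * lam + 2 * mu) / 8 * Real.sqrt d / r < (9 * lam + 8 * mu) / 8 * Real.sqrt d / r := by
      rw [mul_div_assoc, mul_div_assoc]
      exact mul_lt_mul_of_pos_right (by linarith) h3
    linarith
end
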